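/- A Hausdorff topological group G is metrizable if and only if G is a Fréchet–Urysohn ℵ-space. -/

import Mathlib

open TopologicalSpace Filter Set

/-- A family `N` of subsets of a topological space `X` is a *k-network* if whenever `K ⊆ U`
with `K` compact and `U` open, there is a finite subfamily `F ⊆ N` with `K ⊆ ⋃₀ F ⊆ U`. -/
def IsKNetwork {X : Type*} [TopologicalSpace X] (N : Set (Set X)) : Prop :=
  ∀ K U : Set X, IsCompact K → IsOpen U → K ⊆ U →
    ∃ F : Set (Set X), F ⊆ N ∧ F.Finite ∧ K ⊆ ⋃₀ F ∧ ⋃₀ F ⊆ U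

/-- A family `N` of subsets of `X` is a *network* if for every `x` and every open `U ∋ x`
there is `A ∈ N` with `x ∈ A ⊆ U`. -/
def IsNetwork {X : Type*} [TopologicalSpace X] (N : Set (Set X)) : Prop :=
  ∀ (x : X) (U : Set X), IsOpen U → x ∈ U → ∃ A ∈ N, x ∈ A ∧ A ⊆ U

/-- A family of subsets is *locally finite* if every point has a neighbourhood meeting
only finitely many of its members. -/
def IsLocallyFiniteFamily {X : Type*} [TopologicalSpace X] (N : Set (Set X)) : Prop :=
  ∀ x : X, ∃ V ∈ nhds x, {A ∈ N | (A ∩ V).Nonempty}.Finite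

/-- A family of subsets is *σ-locally finite* if it is a countable union of locally finite
families. -/
def IsSigmaLocallyFinite {X : Type*} [TopologicalSpace X] (N : Set (Set X)) : Prop :=
  ∃ f : ℕ → Set (Set X), (∀ n, IsLocallyFiniteFamily (f n)) ∧ N = ⋃ n, f n

/-- An *ℵ-space* is a regular Hausdorff space with a σ-locally finite k-network. -/
def IsAlephSpace (X : Type*) [TopologicalSpace X] : Prop :=
  RegularSpace X ∧ T2Space X ∧ ∃ N : Set (Set X), IsSigmaLocallyFinite N ∧ IsKNetwork N

/-- An *ℵ₀-space* is a regular Hausdorff space with a countable k-network. -/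
def IsAleph0Space (X : Type*) [TopologicalSpace X] : Prop :=
  RegularSpace X ∧ T2Space X ∧ ∃ N : Set (Set X), N.Countable ∧ IsKNetwork N


lemma strong_frechet_at_one {G : Type*} [Group G] [TopologicalSpace G] [IsTopologicalGroup G]
    [T2Space G] [FrechetUrysohnSpace G] (B : ℕ → Set G)
    (hd : ∀ k l, k ≤ l → B l ⊆ B k) (hcl : ∀ k, (1 : G) ∈ closure (B k)) :
    ∃ b : ℕ → G, (∀ k, b k ∈ B k) ∧ Tendsto b atTop (nhds (1 : G)) := by
  by_cases hE : ∀ k, (1 : G) ∈ closure (B k \ {1})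
  · -- choose sequences
    have hx : ∀ k, ∃ x : ℕ → G, (∀ n, x n ∈ B k \ {1}) ∧ Tendsto x atTop (nhds (1 : G)) := by
      intro k
      exact mem_closure_iff_seq_limit.mp (hE k)
    choose x hxmem hxt using hx
    set s : ℕ → G := x 0 with hs
    have hsne : ∀ k, s k ≠ 1 := fun k => (hxmem 0 k).2
    have hst : Tendsto s atTop (nhds (1 : G)) := hxt 0
    -- shift x k to avoid (s k)⁻¹
    have hav : ∀ k, ∃ M : ℕ, ∀ n, M ≤ n → x k n ≠ (s k)⁻¹ := by
      intro k
      have h1 : (s k)⁻¹ ≠ 1 := inv_ne_one.mpr (hsne k)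
      have : {(s k)⁻¹}ᶜ ∈ nhds (1 : G) :=
        (isOpen_compl_singleton).mem_nhds (by simpa using h1.symm)
      have := (hxt k).eventually_mem this
      rcases (eventually_atTop).mp this with ⟨M, hM⟩
      exact ⟨M, fun n hn => hM n hn⟩
    choose M hM using hav
    set y : ℕ → ℕ → G := fun k n => x k (n + M k) with hy
    have hymem : ∀ k n, y k n ∈ B k := fun k n => (hxmem k (n + M k)).1
    have hyne : ∀ k n, y k n ≠ (s k)⁻¹ := fun k n => hM k _ (Nat.le_add_left _ _)
    have hyt : ∀ k, Tendsto (y k) atTop (nhds (1 : G)) := fun k =>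
      (hxt k).comp (tendsto_add_atTop_nat (M k))
    set A : Set G := {g | ∃ k n, g = s k * y k n} with hA
    have h1A : (1 : G) ∉ A := by
      rintro ⟨k, n, h⟩
      exact hyne k n (eq_inv_of_mul_eq_one_right h.symm)
    have h1cl : (1 : G) ∈ closure A := by
      have hskcl : ∀ k, s k ∈ closure A := by
        intro k
        have : Tendsto (fun n => s k * y k n) atTop (nhds (s k * 1)) :=
          (hyt k).const_mul _
        rw [mul_one] at this
        exact mem_closure_of_tendsto this (Eventually.of_forall fun n => ⟨k, n, rfl⟩)
      have : (1 : G) ∈ closure (closure A) :=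
        mem_closure_of_tendsto hst (Eventually.of_forall hskcl)
      rwa [closure_closure] at this
    obtain ⟨a, hamem, hat⟩ := mem_closure_iff_seq_limit.mp h1cl
    choose k n hkn using hamem
    by_cases hbd : ∃ K, {j | k j = K}.Infinite
    · exfalso
      obtain ⟨K, hI⟩ := hbd
      obtain ⟨φ, hφ, hφK⟩ :=
        extraction_of_frequently_atTop (Nat.frequently_atTop_iff_infinite.mpr hI)
      have haφ : Tendsto (fun m => a (φ m)) atTop (nhds (1 : G)) :=
        hat.comp hφ.tendsto_atTop
      have hrep : ∀ m, y K (n (φ m)) = (s K)⁻¹ * a (φ m) := by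
        intro m
        rw [hkn (φ m), hφK m, inv_mul_cancel_left]
      have hyto : Tendsto (fun m => y K (n (φ m))) atTop (nhds ((s K)⁻¹)) := by
        have : Tendsto (fun m => (s K)⁻¹ * a (φ m)) atTop (nhds ((s K)⁻¹ * 1)) :=
          haφ.const_mul _
        rw [mul_one] at this
        simpa only [hrep] using this
      by_cases hbd2 : ∃ c, {m | n (φ m) = c}.Infinite
      · obtain ⟨c, hIc⟩ := hbd2
        obtain ⟨ψ, hψ, hψc⟩ :=
          extraction_of_frequently_atTop (Nat.frequently_atTop_iff_infinite.mpr hIc)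
        have : Tendsto (fun m => y K (n (φ (ψ m)))) atTop (nhds ((s K)⁻¹)) :=
          hyto.comp hψ.tendsto_atTop
        have hconst : (fun m => y K (n (φ (ψ m)))) = fun _ => y K c := by
          funext m; rw [hψc m]
        rw [hconst] at this
        have heq : (s K)⁻¹ = y K c := tendsto_nhds_unique this tendsto_const_nhds
        exact hyne K c heq.symm
      · push_neg at hbd2
        have hfreq : ∀ c : ℕ, ∃ᶠ m in atTop, c ≤ n (φ m) := by
          intro c
          rw [Nat.frequently_atTop_iff_infinite]
          intro hfin
          have heq : {m | n (φ m) < c} = ⋃ i ∈ Finset.range c, {m | n (φ m) = i} := by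
            ext m
            simp only [Set.mem_setOf_eq, Set.mem_iUnion, Finset.mem_range]
            constructor
            · intro h; exact ⟨n (φ m), h, rfl⟩
            · rintro ⟨i, hi, h⟩; omega
          have hlt : {m | n (φ m) < c}.Finite := by
            rw [heq]
            exact Set.Finite.biUnion (Finset.range c).finite_toSet fun i _ =>
              (hbd2 i)
          have : (Set.univ : Set ℕ).Finite := by
            have : (Set.univ : Set ℕ) ⊆ {m | n (φ m) < c} ∪ {m | c ≤ n (φ m)} := by
              intro m _; rcases lt_or_ge (n (φ m)) c with h | h
              · exact Or.inl h
              · exact Or.inr h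
            exact Set.Finite.subset (hlt.union hfin) this
          exact Set.infinite_univ this
        obtain ⟨ψ, hψ, hψge⟩ := extraction_forall_of_frequently hfreq
        have hnto : Tendsto (fun c => n (φ (ψ c))) atTop atTop :=
          tendsto_atTop_mono hψge tendsto_id
        have h1 : Tendsto (fun c => y K (n (φ (ψ c)))) atTop (nhds (1 : G)) :=
          (hyt K).comp hnto
        have h2 : Tendsto (fun c => y K (n (φ (ψ c)))) atTop (nhds ((s K)⁻¹)) :=
          hyto.comp hψ.tendsto_atTop
        have : (1 : G) = (s K)⁻¹ := tendsto_nhds_unique h1 h2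
        exact hsne K (inv_eq_one.mp this.symm)
    · push_neg at hbd
      have hfreq : ∀ m : ℕ, ∃ᶠ j in atTop, m ≤ k j := by
        intro m
        rw [Nat.frequently_atTop_iff_infinite]
        intro hfin
        have hlt : {j | k j < m}.Finite := by
          have heq2 : {j | k j < m} = ⋃ i ∈ Finset.range m, {j | k j = i} := by
            ext j; simp only [Set.mem_setOf_eq, Set.mem_iUnion, Finset.mem_range]
            constructor
            · intro h; exact ⟨k j, h, rfl⟩
            · rintro ⟨i, hi, h⟩; omega
          rw [heq2]
          exact Set.Finite.biUnion (Finset.range m).finite_toSet fun i _ =>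
            (hbd i)
        have : (Set.univ : Set ℕ).Finite := by
          have : (Set.univ : Set ℕ) ⊆ {j | k j < m} ∪ {j | m ≤ k j} := by
            intro j _; rcases lt_or_ge (k j) m with h | h
            · exact Or.inl h
            · exact Or.inr h
          exact Set.Finite.subset (hlt.union hfin) this
        exact Set.infinite_univ this
      obtain ⟨ψ, hψ, hψge⟩ := extraction_forall_of_frequently hfreq
      refine ⟨fun m => y (k (ψ m)) (n (ψ m)), fun m => hd m _ (hψge m) (hymem _ _), ?_⟩
      have hrep : ∀ m, y (k (ψ m)) (n (ψ m)) = (s (k (ψ m)))⁻¹ * a (ψ m) := by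
        intro m
        rw [hkn (ψ m), inv_mul_cancel_left]
      have hkψ : Tendsto (fun m => k (ψ m)) atTop atTop :=
        tendsto_atTop_mono hψge tendsto_id
      have h1 : Tendsto (fun m => (s (k (ψ m)))⁻¹) atTop (nhds ((1 : G)⁻¹)) :=
        (hst.comp hkψ).inv
      rw [inv_one] at h1
      have h2 : Tendsto (fun m => a (ψ m)) atTop (nhds (1 : G)) :=
        hat.comp hψ.tendsto_atTop
      have := h1.mul h2
      rw [one_mul] at this
      simpa only [hrep] using this
  · push_neg at hE
    obtain ⟨K, hK⟩ := hE
    obtain ⟨V, hV, hVe⟩ : ∃ V ∈ nhds (1 : G), V ∩ (B K \ {1}) = ∅ := by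
      rw [mem_closure_iff_nhds] at hK
      push_neg at hK
      obtain ⟨V, hV, hVe⟩ := hK
      exact ⟨V, hV, hVe⟩
    have h1BK : (1 : G) ∈ B K := by
      obtain ⟨z, hz⟩ := (mem_closure_iff_nhds.mp (hcl K)) V hV
      rcases eq_or_ne z 1 with rfl | hz1
      · exact hz.2
      · exfalso
        have : z ∈ V ∩ (B K \ {1}) := ⟨hz.1, hz.2, hz1⟩
        rw [hVe] at this
        exact this
    have h1B : ∀ m, (1 : G) ∈ B m := by
      intro m
      rcases le_total m K with h | h
      · exact hd m K h h1BK
      · by_contra h1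
        have hsub : B m ⊆ B K \ {1} := fun g hg =>
          ⟨hd K m h hg, fun hg1 => h1 (Set.mem_singleton_iff.mp hg1 ▸ hg)⟩
        have : (1 : G) ∈ closure (B K \ {1}) := closure_mono hsub (hcl m)
        exact hK this
    exact ⟨fun _ => 1, h1B, tendsto_const_nhds⟩


lemma cs_star {X : Type*} [TopologicalSpace X] {N : Set (Set X)} (hN : IsKNetwork N)
    {x : X} {u : ℕ → X} (hu : Tendsto u atTop (nhds x)) {U : Set X} (hU : IsOpen U)
    (hxU : x ∈ U) :
    ∃ A ∈ N, A ⊆ U ∧ {n | u n ∈ A}.Infinite ∧ x ∈ closure A := by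
  obtain ⟨M, hM⟩ := (eventually_atTop).mp (hu.eventually_mem (hU.mem_nhds hxU))
  set v : ℕ → X := fun n => u (n + M) with hv
  have hvt : Tendsto v atTop (nhds x) := hu.comp (tendsto_add_atTop_nat M)
  have hvU : ∀ n, v n ∈ U := fun n => hM _ (Nat.le_add_left _ _)
  have hcpt : IsCompact (insert x (Set.range v)) := hvt.isCompact_insert_range
  have hsub : insert x (Set.range v) ⊆ U := by
    rintro y (rfl | ⟨n, rfl⟩)
    · exact hxU
    · exact hvU n
  obtain ⟨F, hFN, hFfin, hKF, hFU⟩ := hN _ U hcpt hU hsub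
  have : ∃ A ∈ F, {n | v n ∈ A}.Infinite := by
    by_contra h
    push_neg at h
    have hfin : (⋃ A ∈ F, {n | v n ∈ A}).Finite :=
      Set.Finite.biUnion hFfin fun A hA => (h A hA)
    have : (Set.univ : Set ℕ) ⊆ ⋃ A ∈ F, {n | v n ∈ A} := by
      intro n _
      obtain ⟨A, hA, hnA⟩ := hKF (Set.mem_insert_of_mem _ ⟨n, rfl⟩)
      exact Set.mem_iUnion₂.mpr ⟨A, hA, hnA⟩
    exact Set.infinite_univ (hfin.subset this)
  obtain ⟨A, hAF, hAI⟩ := this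
  have hAU : A ⊆ U := fun y hy => hFU ⟨A, hAF, hy⟩
  have hxcl : x ∈ closure A := by
    rw [mem_closure_iff_nhds]
    intro W hW
    obtain ⟨M', hM'⟩ := (eventually_atTop).mp (hvt.eventually_mem hW)
    obtain ⟨m, hm, hmgt⟩ := hAI.exists_gt M'
    exact ⟨v m, hM' m hmgt.le, hm⟩
  have hInf : {n | u n ∈ A}.Infinite := by
    intro hfin
    apply hAI
    have : {n | v n ∈ A} ⊆ (fun n => n + M) ⁻¹' {n | u n ∈ A} := fun n hn => hn
    exact Set.Finite.subset (hfin.preimage (add_left_injective M).injOn) this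
  exact ⟨A, hFN hAF, hAU, hInf, hxcl⟩


lemma countable_members_closure {X : Type*} [TopologicalSpace X]
    {f : ℕ → Set (Set X)} (hf : ∀ n, IsLocallyFiniteFamily (f n)) (x : X) :
    {A ∈ ⋃ n, f n | x ∈ closure A}.Countable := by
  have : {A ∈ ⋃ n, f n | x ∈ closure A} ⊆ ⋃ n, {A ∈ f n | x ∈ closure A} := by
    rintro A ⟨hA, hcl⟩
    obtain ⟨n, hn⟩ := Set.mem_iUnion.mp hA
    exact Set.mem_iUnion.mpr ⟨n, hn, hcl⟩
  refine Set.Countable.mono this (Set.countable_iUnion fun n => ?_)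
  obtain ⟨V, hV, hfin⟩ := hf n x
  refine Set.Countable.mono ?_ hfin.countable
  rintro A ⟨hA, hcl⟩
  exact ⟨hA, (mem_closure_iff_nhds.mp hcl V hV).mono (Set.inter_subset_inter_left _ le_rfl) |>.imp fun y hy => ⟨hy.2, hy.1⟩⟩

lemma nhds_one_countably_generated {G : Type*} [Group G] [TopologicalSpace G]
    [IsTopologicalGroup G] [T2Space G] [FrechetUrysohnSpace G]
    {f : ℕ → Set (Set G)} (hf : ∀ n, IsLocallyFiniteFamily (f n))
    (hN : IsKNetwork (⋃ n, f n)) :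
    (nhds (1 : G)).IsCountablyGenerated := by
  set P := {A ∈ ⋃ n, f n | (1 : G) ∈ closure A} with hP
  have hPc : P.Countable := countable_members_closure hf 1
  set C := {S : Set G | (∃ F : Set (Set G), F ⊆ P ∧ F.Finite ∧ S = ⋃₀ F) ∧ S ∈ nhds (1 : G)}
    with hC
  have hCc : C.Countable := by
    have hsub : C ⊆ Set.sUnion '' {F | F.Finite ∧ F ⊆ P} := by
      rintro S ⟨⟨F, hFP, hFfin, rfl⟩, -⟩
      exact ⟨F, ⟨hFfin, hFP⟩, rfl⟩
    exact Set.Countable.mono hsub ((Set.countable_setOf_finite_subset hPc).image _)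
  have hkey : ∀ U ∈ nhds (1 : G), ∃ S ∈ C, S ⊆ U := by
    intro U hU
    have hU'open : IsOpen (interior U) := isOpen_interior
    have h1U' : (1 : G) ∈ interior U := mem_interior_iff_mem_nhds.mpr hU
    by_contra hcon
    push_neg at hcon
    have hfail : ∀ F : Set (Set G), F ⊆ P → F.Finite → ⋃₀ F ⊆ interior U →
        ⋃₀ F ∉ nhds (1 : G) := by
      intro F hFP hFfin hFU hmem
      exact hcon _ ⟨⟨F, hFP, hFfin, rfl⟩, hmem⟩ (hFU.trans interior_subset)
    have hQne : {A | A ∈ P ∧ A ⊆ interior U}.Nonempty := by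
      obtain ⟨A, hAN, hAU, -, hAcl⟩ := cs_star hN
        (tendsto_const_nhds : Tendsto (fun _ : ℕ => (1 : G)) atTop (nhds 1)) hU'open h1U'
      exact ⟨A, ⟨hAN, hAcl⟩, hAU⟩
    have hQc : {A | A ∈ P ∧ A ⊆ interior U}.Countable := hPc.mono fun A hA => hA.1
    obtain ⟨q, hq⟩ := hQc.exists_eq_range hQne
    have hqmem : ∀ i, q i ∈ P ∧ q i ⊆ interior U := by
      intro i
      have : q i ∈ {A | A ∈ P ∧ A ⊆ interior U} := by rw [hq]; exact ⟨i, rfl⟩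
      exact this
    set B : ℕ → Set G := fun k => (⋃ i ∈ Set.Iic k, q i)ᶜ with hB
    have hmono : ∀ k l, k ≤ l → B l ⊆ B k :=
      fun k l hkl => Set.compl_subset_compl.mpr
        (Set.biUnion_subset_biUnion_left (Set.Iic_subset_Iic.mpr hkl))
    have hclB : ∀ k, (1 : G) ∈ closure (B k) := by
      intro k
      by_contra hcl
      rw [mem_closure_iff_nhds] at hcl
      push_neg at hcl
      obtain ⟨V, hV, hVe⟩ := hcl
      have hVsub : V ⊆ ⋃ i ∈ Set.Iic k, q i := by
        intro g hg
        by_contra hgB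
        have : g ∈ V ∩ B k := ⟨hg, hgB⟩
        rw [hVe] at this
        exact this
      refine hfail (q '' Set.Iic k) ?_ ((Set.finite_Iic k).image q) ?_ ?_
      · rintro A ⟨i, -, rfl⟩; exact (hqmem i).1
      · rw [Set.sUnion_image]
        exact Set.iUnion₂_subset fun i _ => (hqmem i).2
      · rw [Set.sUnion_image]
        exact mem_of_superset hV hVsub
    obtain ⟨b, hbmem, hbt⟩ := strong_frechet_at_one B hmono hclB
    obtain ⟨A, hAN, hAU, hAI, hAcl⟩ := cs_star hN hbt hU'open h1U'
    have : A ∈ {A | A ∈ P ∧ A ⊆ interior U} := ⟨⟨hAN, hAcl⟩, hAU⟩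
    rw [hq] at this
    obtain ⟨i, rfl⟩ := this
    have hsubI : {m | b m ∈ q i} ⊆ {m | m < i} := by
      intro m hm
      by_contra hlt
      simp only [Set.mem_setOf_eq, not_lt] at hlt
      exact hbmem m (Set.mem_iUnion₂.mpr ⟨i, Set.mem_Iic.mpr hlt, hm⟩)
    exact hAI ((Set.finite_Iio i).subset hsubI)
  haveI : Countable C := hCc.to_subtype
  have heq : nhds (1 : G) = ⨅ S : C, Filter.principal (S : Set G) := by
    refine le_antisymm (le_iInf fun S => le_principal_iff.mpr S.2.2) ?_
    rw [Filter.le_def]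
    intro U hU
    obtain ⟨S, hSC, hSU⟩ := hkey U hU
    exact mem_of_superset (mem_iInf_of_mem ⟨S, hSC⟩ (mem_principal_self S)) hSU
  rw [heq]
  infer_instance

lemma firstCountable_of_aleph {G : Type*} [Group G] [TopologicalSpace G]
    [IsTopologicalGroup G] [T2Space G] [FrechetUrysohnSpace G]
    {f : ℕ → Set (Set G)} (hf : ∀ n, IsLocallyFiniteFamily (f n))
    (hN : IsKNetwork (⋃ n, f n)) :
    FirstCountableTopology G := by
  haveI := nhds_one_countably_generated hf hN
  constructor
  intro x
  rw [← map_mul_left_nhds_one x]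
  infer_instance

lemma exists_sigma_lf_knetwork (X : Type*) [MetricSpace X] :
    ∃ f : ℕ → Set (Set X), (∀ n, IsLocallyFiniteFamily (f n)) ∧ IsKNetwork (⋃ n, f n) := by
  have hrpos : ∀ n : ℕ, (0 : ℝ) < 1 / ((n : ℝ) + 1) := by
    intro n; positivity
  have hcov : ∀ n : ℕ, ∃ v : X → Set X, (∀ a, IsOpen (v a)) ∧ ⋃ a, v a = Set.univ ∧
      LocallyFinite v ∧ ∀ a, v a ⊆ Metric.ball a (1 / ((n : ℝ) + 1)) := by
    intro n
    exact precise_refinement (fun a : X => Metric.ball a (1 / ((n : ℝ) + 1)))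
      (fun a => Metric.isOpen_ball)
      (Set.iUnion_eq_univ_iff.mpr fun x => ⟨x, Metric.mem_ball_self (hrpos n)⟩)
  choose V hVopen hVcov hVlf hVsub using hcov
  refine ⟨fun n => Set.range (V n), ?_, ?_⟩
  · intro n x
    obtain ⟨W, hW, hfin⟩ := hVlf n x
    refine ⟨W, hW, ?_⟩
    have hsub : {A ∈ Set.range (V n) | (A ∩ W).Nonempty} ⊆ V n '' {a | (V n a ∩ W).Nonempty} := by
      rintro A ⟨⟨a, rfl⟩, hA⟩
      exact ⟨a, hA, rfl⟩
    exact (hfin.image _).subset hsub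
  · intro K U hK hU hKU
    rcases Set.eq_empty_or_nonempty K with rfl | hKne
    · exact ⟨∅, Set.empty_subset _, Set.finite_empty, by simp, by simp⟩
    obtain ⟨δ, hδ, hth⟩ := hK.exists_thickening_subset_open hU hKU
    obtain ⟨n, hn⟩ := exists_nat_one_div_lt (half_pos hδ)
    refine ⟨V n '' {a | (V n a ∩ K).Nonempty}, ?_,
      ((hVlf n).finite_nonempty_inter_compact hK).image _, ?_, ?_⟩
    · rintro A ⟨a, -, rfl⟩
      exact Set.mem_iUnion.mpr ⟨n, ⟨a, rfl⟩⟩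
    · intro x hx
      have hxu : x ∈ ⋃ a, V n a := by rw [hVcov n]; trivial
      obtain ⟨a, ha⟩ := Set.mem_iUnion.mp hxu
      exact ⟨V n a, ⟨a, ⟨x, ha, hx⟩, rfl⟩, ha⟩
    · rintro x ⟨A, ⟨a, ⟨z, hz⟩, rfl⟩, hxA⟩
      refine hth (Metric.mem_thickening_iff.mpr ⟨z, hz.2, ?_⟩)
      have h1 : dist x a < 1 / ((n : ℝ) + 1) := Metric.mem_ball.mp (hVsub n a hxA)
      have h2 : dist z a < 1 / ((n : ℝ) + 1) := Metric.mem_ball.mp (hVsub n a hz.1)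
      calc dist x z ≤ dist x a + dist a z := dist_triangle _ _ _
        _ < 1 / ((n : ℝ) + 1) + 1 / ((n : ℝ) + 1) := by rw [dist_comm a z]; linarith
        _ < δ / 2 + δ / 2 := by linarith
        _ = δ := by ring

/-- A Hausdorff topological group is metrizable iff it is a Fréchet–Urysohn ℵ-space. -/
theorem topologicalGroup_metrizable_iff_frechetUrysohn_aleph
    (G : Type*) [Group G] [TopologicalSpace G] [IsTopologicalGroup G] [T2Space G] :
    TopologicalSpace.MetrizableSpace G ↔ (FrechetUrysohnSpace G ∧ IsAlephSpace G) := by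
  constructor
  · intro hM
    letI : MetricSpace G := TopologicalSpace.metrizableSpaceMetric G
    obtain ⟨f, hf, hN⟩ := exists_sigma_lf_knetwork G
    exact ⟨inferInstance, inferInstance, inferInstance, ⋃ n, f n, ⟨f, hf, rfl⟩, hN⟩
  · rintro ⟨hFU, hReg, hT2, N, ⟨f, hf, rfl⟩, hN⟩
    haveI := hFU
    haveI : FirstCountableTopology G := firstCountable_of_aleph hf hN
    letI u : UniformSpace G := IsTopologicalGroup.rightUniformSpace G
    haveI : Filter.IsCountablyGenerated (uniformity G) := by
      rw [uniformity_eq_comap_nhds_one']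
      exact Filter.comap.isCountablyGenerated _ _
    exact UniformSpace.metrizableSpace
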